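/- Let p, q ∈ H and suppose z_p, z_q ∈ D(T*) satisfy the weak problems ⟨T*z_p, T*w⟩ = ⟨p, w⟩ and ⟨T*z_q, T*w⟩ = ⟨q, w⟩ for all w ∈ D(T*). Then: (i) ⟨q, z_p⟩ = ⟨p, z_q⟩ (the solution operator (L_wL*)⁻¹ : H → D(T*) is self-adjoint with respect to the H inner product); (ii) ⟨q, z_q⟩ ≥ 0, with equality if and only if q = 0 (positive definiteness); and (iii) ⟨q, z_q⟩ equals the square of the supremum over w ∈ D(T*) with T*w ≠ 0 of |⟨q, w⟩| / ‖T*w‖. -/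

import Mathlib

open scoped RealInnerProductSpace

/-- Self-adjointness and positive definiteness of the solution operator
`(L_w L*)⁻¹` and its relation to the dual norm: if `z_p, z_q ∈ D(T†)` solve
`⟪T†z_p, T†w⟫ = ⟪p, w⟫` and `⟪T†z_q, T†w⟫ = ⟪q, w⟫` for all `w ∈ D(T†)`, then
(i) `⟪q, z_p⟫ = ⟪p, z_q⟫`; (ii) `⟪q, z_q⟫ ≥ 0` with equality iff `q = 0`;
(iii) `⟪q, z_q⟫ = (sup { |⟪q, w⟫| / ‖T†w‖ : w ∈ D(T†), T†w ≠ 0 })²`. -/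
theorem llstar_inv_selfadjoint_posdef_dualnorm
    {H : Type*} [NormedAddCommGroup H] [InnerProductSpace ℝ H] [CompleteSpace H]
    (T : H →ₗ.[ℝ] H) (hdense : Dense (T.domain : Set H)) (hclosed : T.IsClosed)
    (hdenseAdj : Dense (T.adjoint.domain : Set H))
    (cP : ℝ) (hcP : 0 < cP)
    (hPoincare : ∀ w : T.adjoint.domain, cP * ‖(w : H)‖ ≤ ‖T.adjoint w‖)
    (p q : H) (zp zq : T.adjoint.domain)
    (hzp : ∀ w : T.adjoint.domain, ⟪T.adjoint zp, T.adjoint w⟫ = ⟪p, (w : H)⟫)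
    (hzq : ∀ w : T.adjoint.domain, ⟪T.adjoint zq, T.adjoint w⟫ = ⟪q, (w : H)⟫) :
    ⟪q, (zp : H)⟫ = ⟪p, (zq : H)⟫ ∧
    (0 ≤ ⟪q, (zq : H)⟫ ∧ (⟪q, (zq : H)⟫ = 0 ↔ q = 0)) ∧
    ⟪q, (zq : H)⟫ = (sSup {r : ℝ | ∃ w : T.adjoint.domain, T.adjoint w ≠ 0 ∧
        r = |⟪q, (w : H)⟫| / ‖T.adjoint w‖}) ^ 2 := by
  have hqq : ⟪q, (zq : H)⟫ = ‖T.adjoint zq‖ ^ 2 := by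
    rw [← hzq zq, real_inner_self_eq_norm_sq]
  have hsym : ⟪q, (zp : H)⟫ = ⟪p, (zq : H)⟫ := by
    rw [← hzq zp, real_inner_comm, hzp zq]
  have hnonneg : 0 ≤ ⟪q, (zq : H)⟫ := by rw [hqq]; positivity
  have hzero : ⟪q, (zq : H)⟫ = 0 ↔ q = 0 := by
    constructor
    · intro h
      have hT : T.adjoint zq = 0 := by
        have := hqq.symm.trans h
        have : ‖T.adjoint zq‖ = 0 := by nlinarith [norm_nonneg (T.adjoint zq)]
        simpa using this
      refine Dense.eq_zero_of_inner_left ℝ hdenseAdj fun w hw => ?_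
      have := hzq ⟨w, hw⟩; rw [hT, inner_zero_left] at this; exact this.symm
    · intro h
      rw [hqq]
      have hT : ‖T.adjoint zq‖ ^ 2 = 0 := by
        rw [← real_inner_self_eq_norm_sq, hzq zq, h, inner_zero_left]
      simpa using hT
  refine ⟨hsym, ⟨hnonneg, hzero⟩, ?_⟩
  set S : Set ℝ := {r : ℝ | ∃ w : T.adjoint.domain, T.adjoint w ≠ 0 ∧
      r = |⟪q, (w : H)⟫| / ‖T.adjoint w‖} with hS
  by_cases hTz : T.adjoint zq = 0
  · have hq0 : q = 0 := by
      refine Dense.eq_zero_of_inner_left ℝ hdenseAdj fun w hw => ?_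
      have := hzq ⟨w, hw⟩; rw [hTz, inner_zero_left] at this; exact this.symm
    have hSsub : S ⊆ {0} := by
      rintro r ⟨w, hw, rfl⟩
      simp [hq0]
    have : sSup S = 0 := by
      rcases Set.eq_empty_or_nonempty S with h | h
      · simp [h, Real.sSup_empty]
      · rw [Set.Nonempty.subset_singleton_iff h |>.mp hSsub]; simp
    rw [this, hqq, hTz]
    simp
  · have hmem : ‖T.adjoint zq‖ ∈ S := by
      refine ⟨zq, hTz, ?_⟩
      rw [← hzq zq, real_inner_self_eq_norm_sq]
      rw [abs_of_nonneg (by positivity), sq, mul_div_assoc,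
        div_self (norm_ne_zero_iff.mpr hTz), mul_one]
    have hub : ∀ r ∈ S, r ≤ ‖T.adjoint zq‖ := by
      rintro r ⟨w, hw, rfl⟩
      rw [div_le_iff₀ (norm_pos_iff.mpr hw)]
      calc |⟪q, (w : H)⟫| = |⟪T.adjoint zq, T.adjoint w⟫| := by rw [hzq w]
        _ ≤ ‖T.adjoint zq‖ * ‖T.adjoint w‖ := abs_real_inner_le_norm _ _
    have : sSup S = ‖T.adjoint zq‖ := IsGreatest.csSup_eq ⟨hmem, hub⟩
    rw [this, hqq]
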